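/- arXiv:2404.05190 — 2 statements merged into one kernel-verified Lean document; each statement's English description precedes it below -/
import Mathlib

section
/- Let d be a positive squarefree integer having a prime factor congruent to 3 modulo 4. Then there is no element α of the field K₁ = ℚ(√2, √d) whose field norm from K₁ down to ℚ(√2) equals 1 + √2. -/
open NumberField IntermediateField

/-- `ℚ(√2)` as a subfield of `ℝ`. -/
noncomputable def Qrt2 : IntermediateField ℚ ℝ :=
  IntermediateField.adjoin ℚ ({Real.sqrt 2} : Set ℝ)

lemma ell_dvd {ℓ : ℕ} (hl : ℓ.Prime) (h3 : ℓ % 4 = 3) (p r : ℤ)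
    (h : (ℓ : ℤ) ∣ p ^ 2 + r ^ 2) : (ℓ : ℤ) ∣ p ∧ (ℓ : ℤ) ∣ r := by
  haveI : Fact ℓ.Prime := ⟨hl⟩
  have hz : (p : ZMod ℓ) ^ 2 + (r : ZMod ℓ) ^ 2 = 0 := by
    have := (ZMod.intCast_zmod_eq_zero_iff_dvd _ ℓ).2 h
    push_cast at this
    exact this
  have hr : (r : ZMod ℓ) = 0 := by
    by_contra hr0
    have : IsSquare (-1 : ZMod ℓ) := by
      refine ⟨(p : ZMod ℓ) * ((r : ZMod ℓ))⁻¹, ?_⟩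
      have hr2 : ((r : ZMod ℓ)) ≠ 0 := hr0
      field_simp
      linear_combination -hz
    exact (ZMod.exists_sq_eq_neg_one_iff.1 this) h3
  have hp : (p : ZMod ℓ) = 0 := by
    rw [hr] at hz
    simpa [pow_eq_zero_iff] using hz
  exact ⟨(ZMod.intCast_zmod_eq_zero_iff_dvd _ ℓ).1 hp,
    (ZMod.intCast_zmod_eq_zero_iff_dvd _ ℓ).1 hr⟩

lemma descent {d ℓ : ℕ} (hd : Squarefree d) (hl : ℓ.Prime) (hld : ℓ ∣ d)
    (h3 : ℓ % 4 = 3) : ∀ n : ℕ, ∀ q p r : ℤ, q.natAbs = n →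
    p ^ 2 + r ^ 2 = (d : ℤ) * q ^ 2 → p = 0 ∧ r = 0 ∧ q = 0 := by
  intro n
  induction n using Nat.strong_induction_on with
  | _ n ih =>
    intro q p r hn heq
    rcases eq_or_ne q 0 with hq0 | hq0
    · subst hq0
      simp only [ne_eq, OfNat.ofNat_ne_zero, not_false_eq_true, zero_pow, mul_zero] at heq
      have hp : p = 0 ∧ r = 0 := by
        constructor <;> nlinarith [sq_nonneg p, sq_nonneg r]
      exact ⟨hp.1, hp.2, rfl⟩
    · exfalso
      have hlz : (ℓ : ℤ) ∣ p ^ 2 + r ^ 2 := by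
        rw [heq]
        exact Dvd.dvd.mul_right (Int.natCast_dvd_natCast.2 hld) _
      obtain ⟨hp, hr⟩ := ell_dvd hl h3 p r hlz
      obtain ⟨p₁, rfl⟩ := hp
      obtain ⟨r₁, rfl⟩ := hr
      -- ℓ² ∣ d q², and ℓ² ∤ d, so ℓ ∣ q
      obtain ⟨d', hd'⟩ := hld
      have hld' : ¬ (ℓ ∣ d') := by
        intro hdd
        obtain ⟨e, he⟩ := hdd
        exact hl.not_isUnit (hd ℓ ⟨e, by rw [hd', he]; ring⟩)
      have hlpos : (0:ℤ) < (ℓ:ℤ) := Int.natCast_pos.2 hl.pos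
      have key : (ℓ : ℤ) ∣ d' * q ^ 2 := by
        have h2 : (ℓ:ℤ)^2 ∣ (d:ℤ) * q ^ 2 := by
          rw [← heq]; ring_nf
          exact dvd_add ⟨p₁^2, by ring⟩ ⟨r₁^2, by ring⟩
        have hdc : (d:ℤ) = (ℓ:ℤ) * (d':ℤ) := by exact_mod_cast congrArg (Nat.cast : ℕ → ℤ) hd'
        rw [hdc] at h2
        rw [sq, mul_assoc] at h2
        exact (mul_dvd_mul_iff_left (a := (ℓ:ℤ)) (by positivity)).1 h2
      have hlq : (ℓ : ℤ) ∣ q := by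
        rcases (Int.Prime.dvd_mul' (hl) key) with h | h
        · exact absurd (Int.ofNat_dvd.1 (by exact_mod_cast h)) hld'
        · exact Int.Prime.dvd_pow' (hl) h
      obtain ⟨q₁, rfl⟩ := hlq
      have heq' : p₁ ^ 2 + r₁ ^ 2 = (d : ℤ) * q₁ ^ 2 := by
        have hl2 : ((ℓ:ℤ)^2) ≠ 0 := by positivity
        apply mul_left_cancel₀ hl2
        ring_nf
        ring_nf at heq
        linarith [heq]
      have hlt : q₁.natAbs < n := by
        rw [← hn]
        have : ((ℓ:ℤ) * q₁).natAbs = ℓ * q₁.natAbs := by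
          simp [Int.natAbs_mul]
        rw [this]
        have hq₁ : q₁.natAbs ≠ 0 := by
          simp only [ne_eq, Int.natAbs_eq_zero]
          intro h; apply hq0; rw [h, mul_zero]
        have := hl.two_le
        calc q₁.natAbs < 2 * q₁.natAbs := by omega
          _ ≤ ℓ * q₁.natAbs := Nat.mul_le_mul_right _ this
      obtain ⟨_, _, hq₁0⟩ := ih _ hlt q₁ p₁ r₁ rfl heq'
      exact hq0 (by rw [hq₁0, mul_zero])

/-- No rational square equals `n` if some prime divides `n` exactly once. -/
lemma no_rat_sqrt {n ℓ : ℕ} (hl : ℓ.Prime) (h1 : ℓ ∣ n) (h2 : ¬ ℓ^2 ∣ n)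
    (x : ℚ) : x ^ 2 ≠ (n : ℚ) := by
  intro hx
  have key : x.num ^ 2 = (n : ℤ) * (x.den : ℤ) ^ 2 := by
    have hden : ((x.den : ℚ)) ≠ 0 := Nat.cast_ne_zero.2 x.den_nz
    have h0 : ((x.num : ℚ)) ^ 2 = (n : ℚ) * (x.den : ℚ) ^ 2 := by
      rw [← Rat.num_div_den x, div_pow] at hx
      field_simp at hx
      linarith [hx]
    exact_mod_cast h0
  have keyn : x.num.natAbs ^ 2 = n * x.den ^ 2 := by
    have h := congrArg Int.natAbs key
    rw [Int.natAbs_pow, Int.natAbs_mul, Int.natAbs_pow, Int.natAbs_natCast,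
      Int.natAbs_natCast] at h
    exact h
  have hlnum : ℓ ∣ x.num.natAbs := hl.dvd_of_dvd_pow (n := 2) (keyn ▸ Dvd.dvd.mul_right h1 _)
  have hcop : Nat.Coprime ℓ x.den := Nat.Coprime.coprime_dvd_left hlnum x.reduced
  have hl2 : ℓ^2 ∣ n * x.den^2 := by
    rw [← keyn]
    exact pow_dvd_pow_of_dvd hlnum 2
  exact h2 ((Nat.Coprime.dvd_of_dvd_mul_right (Nat.Coprime.pow 2 2 hcop) hl2))

/-- Separation of rational parts w.r.t. `√2`. -/
lemma sqrt2_sep {p q : ℚ} (h : (p : ℝ) + (q : ℝ) * Real.sqrt 2 = 0) :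
    p = 0 ∧ q = 0 := by
  have hq : q = 0 := by
    by_contra hq0
    apply irrational_sqrt_two
    refine ⟨-p / q, ?_⟩
    have hq' : (q : ℝ) ≠ 0 := by exact_mod_cast hq0
    push_cast
    field_simp
    linarith [h]
  subst hq
  simp at h
  exact ⟨by exact_mod_cast h, rfl⟩

open IntermediateField in
/-- Every element of `K(√k)` has the form `x + y√k`. -/
lemma mem_adjoin_sqrt (K : Type*) [Field K] [Algebra K ℝ] (t : ℝ) (k : K)
    (hk : t ^ 2 = algebraMap K ℝ k) (ht : t ∉ Set.range (algebraMap K ℝ))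
    {r : ℝ} (hr : r ∈ IntermediateField.adjoin K ({t} : Set ℝ)) :
    ∃ x y : K, r = algebraMap K ℝ x + algebraMap K ℝ y * t := by
  set ι := algebraMap K ℝ with hι
  -- the subalgebra of elements of the form x + y t
  let S : Subalgebra K ℝ :=
    { carrier := {r : ℝ | ∃ x y : K, r = ι x + ι y * t}
      mul_mem' := by
        rintro a b ⟨x, y, rfl⟩ ⟨x', y', rfl⟩
        exact ⟨x * x' + y * y' * k, x * y' + y * x', by
          simp only [map_add, map_mul, ← hk]; ring⟩
      add_mem' := by
        rintro a b ⟨x, y, rfl⟩ ⟨x', y', rfl⟩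
        exact ⟨x + x', y + y', by simp only [map_add]; ring⟩
      algebraMap_mem' := fun x => ⟨x, 0, by simp [hι]⟩ }
  have hinv : ∀ r ∈ S, r⁻¹ ∈ S := by
    rintro r ⟨x, y, rfl⟩
    rcases eq_or_ne y 0 with rfl | hy
    · exact ⟨x⁻¹, 0, by simp [map_inv₀]⟩
    rcases eq_or_ne (ι x + ι y * t) 0 with h0 | h0
    · exact ⟨0, 0, by simp [h0]⟩
    have hinj : Function.Injective ι := (algebraMap K ℝ).injective
    have hne : x ^ 2 - k * y ^ 2 ≠ 0 := by
      intro hzero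
      have hyR : ι y ≠ 0 := fun h => hy (hinj (by simpa using h))
      have hk2 : ι x ^ 2 = t ^ 2 * ι y ^ 2 := by
        have h1 : ι (x ^ 2) = ι (k * y ^ 2) := congrArg ι (sub_eq_zero.1 hzero)
        rw [map_pow, map_mul, map_pow, ← hk] at h1
        linarith [h1]
      have hfac : (t - ι x / ι y) * (t + ι x / ι y) = 0 := by
        field_simp
        linarith [hk2]
      rcases mul_eq_zero.1 hfac with h | h
      · exact ht ⟨x / y, by show ι (x / y) = t; rw [map_div₀]; linarith [h]⟩
      · exact ht ⟨-(x / y), by show ι (-(x / y)) = t; rw [map_neg, map_div₀]; linarith [h]⟩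
    refine ⟨x / (x ^ 2 - k * y ^ 2), -y / (x ^ 2 - k * y ^ 2), ?_⟩
    have hDne : ι (x ^ 2 - k * y ^ 2) ≠ 0 := fun h => hne (hinj (by simpa using h))
    apply inv_eq_of_mul_eq_one_right
    rw [map_div₀, map_div₀, map_neg, map_sub, map_pow, map_mul, map_pow]
    rw [map_sub, map_pow, map_mul, map_pow] at hDne
    calc _ = (ι x ^ 2 - ι y ^ 2 * t ^ 2) / (ι x ^ 2 - ι k * ι y ^ 2) := by ring
      _ = 1 := by rw [hk, div_eq_one_iff_eq hDne]; ring
  have hS : IntermediateField.adjoin K ({t} : Set ℝ) ≤ S.toIntermediateField hinv := by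
    rw [IntermediateField.adjoin_le_iff]
    rintro s rfl
    exact ⟨0, 1, by simp⟩
  exact hS hr

lemma mem_Qrt2 {r : ℝ} (hr : r ∈ Qrt2) : ∃ a b : ℚ, r = (a : ℝ) + (b : ℝ) * Real.sqrt 2 := by
  have h2 : Real.sqrt 2 ^ 2 = algebraMap ℚ ℝ 2 := by
    rw [Real.sq_sqrt (by norm_num : (2:ℝ) ≥ 0)]
    norm_num
  have ht : Real.sqrt 2 ∉ Set.range (algebraMap ℚ ℝ) := by
    intro ⟨q, hq⟩
    exact irrational_sqrt_two ⟨q, by rw [← hq]; exact (eq_ratCast (algebraMap ℚ ℝ) q).symm⟩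
  obtain ⟨x, y, hxy⟩ := mem_adjoin_sqrt ℚ (Real.sqrt 2) 2 h2 ht hr
  exact ⟨x, y, by rw [hxy, eq_ratCast (algebraMap ℚ ℝ), eq_ratCast (algebraMap ℚ ℝ)]⟩

lemma sqrtd_not_mem {d ℓ : ℕ} (hd0 : 0 < d) (hd : Squarefree d) (hl : ℓ.Prime)
    (hld : ℓ ∣ d) (h3 : ℓ % 4 = 3) : Real.sqrt d ∉ Qrt2 := by
  intro hmem
  obtain ⟨a, b, hab⟩ := mem_Qrt2 hmem
  have hl2 : ¬ (ℓ^2 ∣ d) := by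
    intro hdvd
    exact (Nat.Prime.one_lt hl).ne' (Nat.isUnit_iff.1 (hd ℓ (by rwa [← sq])))
  have hlne2 : ℓ ≠ 2 := by omega
  have hsq2 : Real.sqrt 2 ^ 2 = 2 := Real.sq_sqrt (by norm_num)
  have hdsq : Real.sqrt d ^ 2 = (d : ℝ) := Real.sq_sqrt (by positivity)
  have hdR : ((a^2 + 2*b^2 - d : ℚ) : ℝ) + ((2*a*b : ℚ) : ℝ) * Real.sqrt 2 = 0 := by
    push_cast
    linear_combination (-(Real.sqrt (d:ℝ)) - (a:ℝ) - (b:ℝ)*Real.sqrt 2) * hab + hdsq - (b:ℝ)^2*hsq2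
  obtain ⟨h1, h2⟩ := sqrt2_sep hdR
  rcases mul_eq_zero.1 (by linarith [h2] : a * b = 0) with ha | hb
  · -- a = 0 : (2b)^2 = 2d
    have : (2*b)^2 = ((2*d : ℕ) : ℚ) := by push_cast; linear_combination 2*h1 - 2*a*ha
    refine no_rat_sqrt hl (Dvd.dvd.mul_left hld 2) ?_ (2*b) this
    intro hdvd
    have : ℓ^2 ∣ d := (Nat.Coprime.dvd_of_dvd_mul_left
      (Nat.Coprime.pow_left 2 ((Nat.coprime_primes hl Nat.prime_two).2 hlne2)) hdvd)
    exact hl2 this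
  · -- b = 0 : a^2 = d
    have : a^2 = ((d : ℕ) : ℚ) := by push_cast; linear_combination h1 - 2*b*hb
    exact no_rat_sqrt hl hld hl2 a this

set_option maxHeartbeats 1000000 in
set_option synthInstance.maxHeartbeats 400000 in
/-- Let `d` be a positive squarefree integer having a prime factor
congruent to `3` modulo `4`. Then there is no element `α` of `K₁ = ℚ(√2, √d)` whose
field norm from `K₁` down to `ℚ(√2)` equals `1 + √2`. -/
theorem stmt2 (d : ℕ) (hd0 : 0 < d) (hd : Squarefree d)
    (hpf : ∃ ℓ : ℕ, ℓ.Prime ∧ ℓ ∣ d ∧ ℓ % 4 = 3) :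
    ¬ ∃ α : ↥(IntermediateField.adjoin ↥Qrt2 ({Real.sqrt d} : Set ℝ)),
        ((Algebra.norm ↥Qrt2 α : ↥Qrt2) : ℝ) = 1 + Real.sqrt 2 := by
  intro hex
  obtain ⟨ℓ, hl, hld, h3⟩ := hpf
  set t := Real.sqrt d with htdef
  have hmap : ∀ z : ↥Qrt2, algebraMap ↥Qrt2 ℝ z = (z : ℝ) := fun z => rfl
  have ht0 : 0 < t := Real.sqrt_pos.2 (by exact_mod_cast hd0)
  have htt : t * t = (d : ℝ) := by
    rw [← sq]; exact Real.sq_sqrt (by positivity)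
  have htK : t ∉ Set.range (algebraMap ↥Qrt2 ℝ) := by
    rintro ⟨⟨x, hx⟩, hxe⟩
    have hxt : x = t := hxe
    rw [hxt] at hx
    exact sqrtd_not_mem hd0 hd hl hld h3 hx
  have hk : t ^ 2 = algebraMap ↥Qrt2 ℝ ((d : ℕ) : ↥Qrt2) := by
    rw [map_natCast, Real.sq_sqrt (by positivity)]
  have hdKR : (((d : ℕ) : ↥Qrt2) : ℝ) = (d : ℝ) := by
    rw [← hmap, map_natCast]
  set K₁ := IntermediateField.adjoin ↥Qrt2 ({t} : Set ℝ) with hK₁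
  have hts : t ∈ K₁ := IntermediateField.subset_adjoin _ _ rfl
  set s : K₁ := ⟨t, hts⟩ with hs
  obtain ⟨α, hα⟩ := hex
  have hcoe_smul : ∀ (c : ↥Qrt2) (z : K₁), ((c • z : K₁) : ℝ) = (c : ℝ) * (z : ℝ) := by
    intro c z
    rfl
  have hcoe_mulK : ∀ (z w : ↥Qrt2), ((z * w : ↥Qrt2) : ℝ) = (z : ℝ) * (w : ℝ) := by
    intro z w
    rfl
  -- linear independence of 1, s over ℚ(√2)
  have li : LinearIndependent ↥Qrt2 ![1, s] := by
    rw [linearIndependent_fin2]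
    constructor
    · simp only [Matrix.cons_val_one, Matrix.head_cons]
      intro h0
      have h0' : (s : ℝ) = ((0 : K₁) : ℝ) := congrArg Subtype.val h0
      rw [ZeroMemClass.coe_zero] at h0'
      exact ht0.ne' h0'
    · intro a ha
      simp only [Matrix.cons_val_one, Matrix.head_cons, Matrix.cons_val_zero] at ha
      have haR : (a : ℝ) * t = 1 := by
        have := congrArg Subtype.val ha
        rw [hcoe_smul] at this
        simpa using this
      have ha0 : (a : ℝ) ≠ 0 := by
        intro h; rw [h] at haR; simp at haR
      apply htK
      refine ⟨a⁻¹, ?_⟩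
      rw [hmap]
      exact inv_eq_of_mul_eq_one_right haR
  have span : ⊤ ≤ Submodule.span ↥Qrt2 (Set.range ![1, s]) := by
    rintro β -
    obtain ⟨x, y, hxy⟩ := mem_adjoin_sqrt ↥Qrt2 t ((d : ℕ) : ↥Qrt2) hk htK β.2
    have hβ : β = x • (1 : K₁) + y • s := by
      apply Subtype.ext
      push_cast [hcoe_smul]
      simpa using hxy
    rw [hβ]
    apply Submodule.add_mem
    · exact Submodule.smul_mem _ _ (Submodule.subset_span ⟨0, rfl⟩)
    · exact Submodule.smul_mem _ _ (Submodule.subset_span ⟨1, rfl⟩)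
  let b : Module.Basis (Fin 2) ↥Qrt2 K₁ := Module.Basis.mk li span
  have hb0 : b 0 = 1 := by simp [b, Module.Basis.coe_mk]
  have hb1 : b 1 = s := by simp [b, Module.Basis.coe_mk]
  -- write α = x + y s
  obtain ⟨x, y, hxy⟩ := mem_adjoin_sqrt ↥Qrt2 t ((d : ℕ) : ↥Qrt2) hk htK α.2
  have hxyR : (α : ℝ) = (x : ℝ) + (y : ℝ) * t := hxy
  have e0 : α * b 0 = x • b 0 + y • b 1 := by
    apply Subtype.ext
    rw [hb0, hb1]
    push_cast [hcoe_smul]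
    simpa using hxyR
  have e1 : α * b 1 = (((d : ℕ) : ↥Qrt2) * y) • b 0 + x • b 1 := by
    apply Subtype.ext
    rw [hb0, hb1]
    push_cast [hcoe_smul, hcoe_mulK, hdKR]
    show (α : ℝ) * t = _
    ring_nf
    linear_combination t * hxyR + (y : ℝ) * htt
  -- compute the norm via the matrix determinant
  have hnorm : Algebra.norm ↥Qrt2 α = x ^ 2 - ((d : ℕ) : ↥Qrt2) * y ^ 2 := by
    rw [Algebra.norm_eq_matrix_det b α, Matrix.det_fin_two]
    have h00 : Algebra.leftMulMatrix b α 0 0 = x := by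
      rw [Algebra.leftMulMatrix_eq_repr_mul, e0, map_add, map_smul, map_smul,
        b.repr_self, b.repr_self]
      simp [Finsupp.single_apply]
    have h10 : Algebra.leftMulMatrix b α 1 0 = y := by
      rw [Algebra.leftMulMatrix_eq_repr_mul, e0, map_add, map_smul, map_smul,
        b.repr_self, b.repr_self]
      simp [Finsupp.single_apply]
    have h01 : Algebra.leftMulMatrix b α 0 1 = ((d : ℕ) : ↥Qrt2) * y := by
      rw [Algebra.leftMulMatrix_eq_repr_mul, e1, map_add, map_smul, map_smul,
        b.repr_self, b.repr_self]
      simp [Finsupp.single_apply]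
    have h11 : Algebra.leftMulMatrix b α 1 1 = x := by
      rw [Algebra.leftMulMatrix_eq_repr_mul, e1, map_add, map_smul, map_smul,
        b.repr_self, b.repr_self]
      simp [Finsupp.single_apply]
    rw [h00, h01, h10, h11]
    ring
  -- pass to ℝ
  have hR : (x : ℝ) ^ 2 - (d : ℝ) * (y : ℝ) ^ 2 = 1 + Real.sqrt 2 := by
    rw [← hα, hnorm]
    push_cast [hcoe_mulK, hdKR]
    ring
  -- write x, y in terms of rationals
  obtain ⟨a, b', hab⟩ := mem_Qrt2 x.2
  obtain ⟨c, e, hce⟩ := mem_Qrt2 y.2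
  have hsq2 : Real.sqrt 2 ^ 2 = 2 := Real.sq_sqrt (by norm_num)
  have hsep : ((a^2 + 2*b'^2 - d*c^2 - 2*d*e^2 - 1 : ℚ) : ℝ)
      + ((2*a*b' - 2*d*c*e - 1 : ℚ) : ℝ) * Real.sqrt 2 = 0 := by
    push_cast
    rw [hab, hce] at hR
    linear_combination hR - ((b' : ℝ)^2 - (d : ℝ)*(e : ℝ)^2) * hsq2
  obtain ⟨hP1', hQ1'⟩ := sqrt2_sep hsep
  have hP1 : a^2 + 2*b'^2 - (d:ℚ)*c^2 - 2*d*e^2 = 1 := by linarith [hP1']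
  have hQ1 : 2*a*b' - 2*(d:ℚ)*c*e = 1 := by linarith [hQ1']
  -- the key rational identity
  set A : ℚ := a^2 - 2*b'^2 + d*c^2 - 2*d*e^2 with hA
  set B : ℚ := 2*a*c - 4*b'*e with hB
  have hABeq : A^2 - d*B^2 = -1 := by
    rw [hA, hB]
    linear_combination (a^2 + 2*b'^2 - (d:ℚ)*c^2 - 2*d*e^2 + 1) * hP1
      - 2 * (2*a*b' - 2*(d:ℚ)*c*e + 1) * hQ1
  -- clear denominators and apply descent
  have hAden : (A.den : ℚ) ≠ 0 := by exact_mod_cast A.den_nz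
  have hBden : (B.den : ℚ) ≠ 0 := by exact_mod_cast B.den_nz
  have hAnum : (A.num : ℚ) = A * A.den := (Rat.mul_den_eq_num A).symm
  have hBnum : (B.num : ℚ) = B * B.den := (Rat.mul_den_eq_num B).symm
  have hint : (A.num * B.den)^2 + ((A.den : ℤ) * B.den)^2 = (d : ℤ) * (B.num * A.den)^2 := by
    have hQQ : ((A.num * (B.den : ℤ) : ℤ) : ℚ)^2 + (((A.den : ℤ) * B.den : ℤ) : ℚ)^2
        = ((d : ℤ) : ℚ) * (((B.num * (A.den : ℤ) : ℤ)) : ℚ)^2 := by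
      push_cast
      rw [hAnum, hBnum]
      linear_combination ((A.den : ℚ) * B.den)^2 * hABeq
    exact_mod_cast hQQ
  obtain ⟨-, hzero, -⟩ := descent hd hl hld h3 (B.num * A.den).natAbs (B.num * A.den)
    (A.num * B.den) ((A.den : ℤ) * B.den) rfl hint
  exact absurd hzero (by positivity)
end

section
/- Let d be a positive squarefree integer having a prime factor congruent to 3 modulo 4. Then there is no element u of the field k₂ = ℚ(√(2+√2), √d) whose field norm from k₂ down to ℚ(√2) equals 1 + √2. -/
set_option maxHeartbeats 1000000
set_option synthInstance.maxHeartbeats 400000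


open NumberField IntermediateField Polynomial

/-- `k₂ = ℚ(√(2+√2), √d)` as an extension of `ℚ(√2)` inside `ℝ`.
(Note `√2 = (√(2+√2))² - 2 ∈ ℚ(√(2+√2), √d)`, so this adjoin, i.e. the compositum of
`ℚ(√2)` with `√(2+√2)` and `√d`, has the same underlying subfield of `ℝ`.) -/
noncomputable def ktwo (d : ℕ) : IntermediateField ↥Qrt2 ℝ :=
  IntermediateField.adjoin ↥Qrt2 ({Real.sqrt (2 + Real.sqrt 2), Real.sqrt d} : Set ℝ)



lemma descent_s6 (d : ℕ) (hd : Squarefree d) (ℓ : ℕ) (hℓ : ℓ.Prime) (hℓd : ℓ ∣ d)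
    (hℓ4 : ℓ % 4 = 3) :
    ∀ n : ℕ, ∀ a b c : ℤ, c.natAbs = n → c ≠ 0 → a^2 + c^2 = (d:ℤ) * b^2 → False := by
  intro n
  induction n using Nat.strong_induction_on with
  | _ n IH =>
    intro a b c hn hc heq
    haveI : Fact ℓ.Prime := ⟨hℓ⟩
    have hl0 : (ℓ:ℤ) ≠ 0 := Int.natCast_ne_zero.2 hℓ.ne_zero
    have hd0 : (d : ZMod ℓ) = 0 := (ZMod.natCast_eq_zero_iff d ℓ).2 hℓd
    have key : ∀ x y : ℤ, (x:ZMod ℓ)^2 + (y:ZMod ℓ)^2 = 0 → (y : ZMod ℓ) ≠ 0 → False := by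
      intro x y h hy
      have hy2 : (y:ZMod ℓ)^2 ≠ 0 := pow_ne_zero _ hy
      have hx2 : (x:ZMod ℓ)^2 = -(y:ZMod ℓ)^2 := by linear_combination h
      have hsq1 : ((x : ZMod ℓ) * (y:ZMod ℓ)⁻¹)^2 = -1 := by
        rw [mul_pow, inv_pow, hx2, neg_mul, mul_inv_cancel₀ hy2]
      have hsq : IsSquare (-1 : ZMod ℓ) := ⟨(x:ZMod ℓ) * (y:ZMod ℓ)⁻¹, by rw [← hsq1]; ring⟩
      rw [ZMod.exists_sq_eq_neg_one_iff] at hsq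
      exact hsq hℓ4
    have hmod : (a:ZMod ℓ)^2 + (c:ZMod ℓ)^2 = 0 := by
      have := congrArg (Int.cast : ℤ → ZMod ℓ) heq
      push_cast at this
      rw [this, hd0]; ring
    have hca : (c : ZMod ℓ) = 0 := by
      by_contra h; exact key a c hmod h
    have haa : (a : ZMod ℓ) = 0 := by
      by_contra h
      exact key c a (by linear_combination hmod) h
    rw [ZMod.intCast_zmod_eq_zero_iff_dvd] at hca haa
    obtain ⟨a', rfl⟩ := haa
    obtain ⟨c', rfl⟩ := hca
    have hℓ2 : ¬ ((ℓ:ℤ)*(ℓ:ℤ) ∣ (d:ℤ)) := by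
      rw [← Int.natCast_mul, Int.natCast_dvd_natCast]
      intro h
      exact hℓ.not_isUnit (hd ℓ h)
    obtain ⟨e, he⟩ := hℓd
    have heI : (d : ℤ) = (ℓ:ℤ) * (e:ℤ) := by exact_mod_cast he
    have hle : ¬ ((ℓ:ℤ) ∣ (e:ℤ)) := by
      intro h
      exact hℓ2 (heI ▸ mul_dvd_mul_left _ h)
    have hlprime : Prime (ℓ:ℤ) := Nat.prime_iff_prime_int.1 hℓ
    have hlb : (ℓ:ℤ) ∣ b := by
      have h2 : (ℓ:ℤ)*(ℓ:ℤ) ∣ (ℓ:ℤ) * ((e:ℤ) * b^2) := by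
        refine ⟨a'^2 + c'^2, ?_⟩
        linear_combination (-1:ℤ) * heq - b^2 * heI
      have h1 : (ℓ:ℤ) ∣ (e:ℤ) * b^2 := by
        have := (mul_dvd_mul_iff_left hl0).1 h2
        exact this
      rcases hlprime.dvd_mul.1 h1 with h | h
      · exact absurd h hle
      · exact hlprime.dvd_of_dvd_pow h
    obtain ⟨b', rfl⟩ := hlb
    have heq' : a'^2 + c'^2 = (d:ℤ) * b'^2 := by
      refine mul_left_cancel₀ (pow_ne_zero 2 hl0) ?_
      linear_combination heq
    have hc' : c' ≠ 0 := by rintro rfl; simp at hc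
    refine IH c'.natAbs ?_ a' b' c' rfl hc' heq'
    rw [← hn, Int.natAbs_mul]
    have h1 : 1 < ℓ := hℓ.one_lt
    have hc'0 : 0 < c'.natAbs := Int.natAbs_pos.2 hc'
    have : ((ℓ:ℤ)).natAbs = ℓ := rfl
    rw [this]
    nlinarith

lemma no_rat_sol (d : ℕ) (hd : Squarefree d) (ℓ : ℕ) (hℓ : ℓ.Prime) (hℓd : ℓ ∣ d)
    (hℓ4 : ℓ % 4 = 3) (x y : ℚ) : x^2 - (d:ℚ)*y^2 ≠ -1 := by
  intro h
  have hxd : (x.den : ℚ) ≠ 0 := by exact_mod_cast x.den_nz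
  have hyd : (y.den : ℚ) ≠ 0 := by exact_mod_cast y.den_nz
  have hx' : (x.num:ℚ) = x * x.den := (Rat.mul_den_eq_num x).symm
  have hy' : (y.num:ℚ) = y * y.den := (Rat.mul_den_eq_num y).symm
  have hcne : (x.den:ℤ) * (y.den:ℤ) ≠ 0 := by
    exact mul_ne_zero (Int.natCast_ne_zero.2 x.den_nz) (Int.natCast_ne_zero.2 y.den_nz)
  have heq : (x.num * (y.den:ℤ))^2 + ((x.den:ℤ)*(y.den:ℤ))^2 = (d:ℤ) * (y.num * (x.den:ℤ))^2 := by
    have hQ : ((x.num * (y.den:ℤ))^2 + ((x.den:ℤ)*(y.den:ℤ))^2 : ℚ)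
        = ((d:ℤ) : ℚ) * ((y.num * (x.den:ℤ) : ℤ) : ℚ)^2 := by
      push_cast
      rw [hx', hy']
      linear_combination ((x.den:ℚ)*(y.den:ℚ))^2 * h
    exact_mod_cast hQ
  exact descent_s6 d hd ℓ hℓ hℓd hℓ4 _ _ _ _ rfl hcne heq

lemma isIntegral_of_sq (c : ℚ) (r : ℝ) (hr : r^2 = (c:ℝ)) : IsIntegral ℚ r := by
  refine ⟨X^2 - C c, ?_, ?_⟩
  · apply monic_X_pow_sub_C _ (by norm_num)
  · simp [eval₂_sub, hr]

lemma minpoly_of_sq (c : ℚ) (r : ℝ) (hr : r^2 = (c:ℝ)) (hirr : Irrational r) :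
    minpoly ℚ r = X^2 - C c := by
  have hint := isIntegral_of_sq c r hr
  have hmonq : (X^2 - C c : ℚ[X]).Monic := monic_X_pow_sub_C _ (by norm_num)
  have hdvd : minpoly ℚ r ∣ X^2 - C c := minpoly.dvd ℚ r (by simp [hr])
  have hmon := minpoly.monic hint
  have hpos : 0 < (minpoly ℚ r).natDegree := minpoly.natDegree_pos hint
  have hne1 : (minpoly ℚ r).natDegree ≠ 1 := by
    intro h1
    have hdeg : (minpoly ℚ r).degree = 1 := by
      rw [degree_eq_natDegree (minpoly.ne_zero hint), h1]
      rfl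
    rw [minpoly.degree_eq_one_iff] at hdeg
    obtain ⟨q, hq⟩ := hdeg
    exact hirr ⟨q, hq⟩
  have hle : (minpoly ℚ r).natDegree ≤ 2 := by
    have := natDegree_le_of_dvd hdvd hmonq.ne_zero
    rwa [natDegree_X_pow_sub_C] at this
  exact (Polynomial.eq_of_monic_of_dvd_of_natDegree_le hmon hmonq hdvd
    (by rw [natDegree_X_pow_sub_C]; omega)).symm

lemma rep_unique (r : ℝ) (hirr : Irrational r) (a b a' b' : ℚ)
    (h : (a:ℝ) + b*r = a' + b'*r) : a = a' ∧ b = b' := by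
  by_cases hb : b = b'
  · subst hb
    have hA : (a:ℝ) = (a':ℝ) := by linarith
    exact ⟨by exact_mod_cast hA, rfl⟩
  · exfalso
    apply hirr
    have hbb : ((b:ℝ) - b') ≠ 0 := sub_ne_zero.2 (by exact_mod_cast hb)
    refine ⟨(a' - a) / (b - b'), ?_⟩
    push_cast
    field_simp
    linarith

lemma norm_quad (c : ℚ) (r : ℝ) (hr : r^2 = (c:ℝ)) (hirr : Irrational r)
    (w : ↥(IntermediateField.adjoin ℚ ({r} : Set ℝ))) :
    ∃ a b : ℚ, ((w:ℝ) = a + b*r) ∧ Algebra.norm ℚ w = a^2 - c*b^2 := by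
  have hint : IsIntegral ℚ r := isIntegral_of_sq c r hr
  set pb := IntermediateField.adjoin.powerBasis hint with hpb
  have hdim : pb.dim = 2 := by
    have h : pb.dim = (minpoly ℚ r).natDegree := by
      simp [hpb, IntermediateField.adjoin.powerBasis]
    rw [h, minpoly_of_sq c r hr hirr, natDegree_X_pow_sub_C]
  set B := pb.basis.reindex (finCongr hdim) with hBdef
  have hB : ∀ i : Fin 2, B i = pb.gen ^ (i : ℕ) := by
    intro i
    rw [hBdef, Module.Basis.reindex_apply, pb.basis_eq_pow]
    congr 1
  have hgen : ((pb.gen : ℝ)) = r := by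
    rw [IntermediateField.adjoin.powerBasis_gen]
    rfl
  have hB0 : B 0 = 1 := by rw [hB 0]; norm_num
  have hB1 : B 1 = pb.gen := by rw [hB 1]; norm_num
  set a := B.repr w 0 with ha
  set b := B.repr w 1 with hb
  have hw : w = a • (1 : ↥(IntermediateField.adjoin ℚ ({r} : Set ℝ))) + b • pb.gen := by
    have h2 := B.sum_repr w
    rw [Fin.sum_univ_two, hB0, hB1] at h2
    rw [← h2]
  have hcoe : ((w : ℝ)) = a + b*r := by
    rw [hw]
    push_cast [hgen, Rat.smul_def]
    ring
  refine ⟨a, b, hcoe, ?_⟩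
  have hrep0 : ∀ p q : ℚ, B.repr (p • (1 : ↥(IntermediateField.adjoin ℚ ({r} : Set ℝ))) + q • pb.gen) 0 = p := by
    intro p q
    rw [← hB0, ← hB1, map_add, map_smul, map_smul, B.repr_self, B.repr_self]
    simp
  have hrep1 : ∀ p q : ℚ, B.repr (p • (1 : ↥(IntermediateField.adjoin ℚ ({r} : Set ℝ))) + q • pb.gen) 1 = q := by
    intro p q
    rw [← hB0, ← hB1, map_add, map_smul, map_smul, B.repr_self, B.repr_self]
    simp
  have h1 : w * pb.gen = (c*b) • (1 : ↥(IntermediateField.adjoin ℚ ({r} : Set ℝ))) + a • pb.gen := by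
    apply Subtype.ext
    push_cast [hgen, Rat.smul_def, hcoe]
    linear_combination (b:ℝ) * hr
  have h0 : w * B 0 = a • (1 : ↥(IntermediateField.adjoin ℚ ({r} : Set ℝ))) + b • pb.gen := by
    rw [hB0, mul_one]; exact hw
  rw [show Algebra.norm ℚ w = (Algebra.leftMulMatrix B w).det from Algebra.norm_eq_matrix_det B w,
    Matrix.det_fin_two]
  have e00 : Algebra.leftMulMatrix B w 0 0 = a := by
    rw [Algebra.leftMulMatrix_eq_repr_mul, h0, hrep0]
  have e10 : Algebra.leftMulMatrix B w 1 0 = b := by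
    rw [Algebra.leftMulMatrix_eq_repr_mul, h0, hrep1]
  have e01 : Algebra.leftMulMatrix B w 0 1 = c*b := by
    rw [Algebra.leftMulMatrix_eq_repr_mul, hB1, h1, hrep0]
  have e11 : Algebra.leftMulMatrix B w 1 1 = a := by
    rw [Algebra.leftMulMatrix_eq_repr_mul, hB1, h1, hrep1]
  rw [e00, e10, e01, e11]
  ring

lemma isIntegral_of_sq' (K : IntermediateField ℚ ℝ) (x : ℝ) (y : ↥K) (h : x^2 = (y:ℝ)) :
    IsIntegral ↥K x := by
  refine ⟨X^2 - C y, monic_X_pow_sub_C _ (by norm_num), ?_⟩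
  simp [h]

-- uses helpers: isIntegral_of_sq, norm_quad, rep_unique, no_rat_sol (to be pasted)

/-- Let `d` be a positive squarefree integer having a prime factor
congruent to `3` modulo `4`. Then there is no element `u` of the field
`k₂ = ℚ(√(2+√2), √d)` whose field norm from `k₂` down to `ℚ(√2)` equals `1 + √2`. -/
theorem stmt6 (d : ℕ) (hd0 : 0 < d) (hd : Squarefree d)
    (hpf : ∃ ℓ : ℕ, ℓ.Prime ∧ ℓ ∣ d ∧ ℓ % 4 = 3) :
    ¬ ∃ u : ↥(ktwo d), ((Algebra.norm ↥Qrt2 u : ↥Qrt2) : ℝ) = 1 + Real.sqrt 2 := by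

  rintro ⟨u, hu⟩
  obtain ⟨ℓ, hℓ, hℓd, hℓ4⟩ := hpf
  have s2 : Real.sqrt 2 ^ 2 = ((2:ℚ):ℝ) := by
    rw [Real.sq_sqrt (by norm_num : (0:ℝ) ≤ 2)]; norm_num
  have irr2 : Irrational (Real.sqrt 2) := irrational_sqrt_two
  have hdsq : ¬ IsSquare d := by
    rintro ⟨k, hk⟩
    have hlk : ℓ ∣ k := by
      have : ℓ ∣ k * k := hk ▸ hℓd
      exact (Nat.Prime.dvd_mul hℓ).1 this |>.elim id id
    have : ℓ * ℓ ∣ d := hk ▸ mul_dvd_mul hlk hlk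
    exact hℓ.not_isUnit (hd ℓ this)
  have irrd : Irrational (Real.sqrt d) := irrational_sqrt_natCast_iff.2 hdsq
  have sd : Real.sqrt d ^ 2 = (((d:ℚ)):ℝ) := by
    rw [Real.sq_sqrt (by positivity : (0:ℝ) ≤ (d:ℝ))]; norm_num
  -- finite dimensionality
  have hint2 : IsIntegral ℚ (Real.sqrt 2) := isIntegral_of_sq 2 _ s2
  haveI fin1 : FiniteDimensional ℚ ↥Qrt2 := by
    unfold Qrt2
    exact IntermediateField.adjoin.finiteDimensional hint2
  have mem2 : Real.sqrt 2 ∈ Qrt2 := by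
    unfold Qrt2; exact IntermediateField.subset_adjoin _ _ rfl
  haveI fin2 : FiniteDimensional ↥Qrt2 ↥(ktwo d) := by
    unfold ktwo
    apply IntermediateField.finiteDimensional_adjoin
    intro x hx
    rcases hx with h | h
    · subst h
      refine isIntegral_of_sq' Qrt2 _ ⟨2 + Real.sqrt 2, ?_⟩ ?_
      · exact add_mem (by exact_mod_cast IntermediateField.natCast_mem Qrt2 2) mem2
      · rw [Real.sq_sqrt (by positivity)]
    · rw [Set.mem_singleton_iff] at h
      subst h
      refine isIntegral_of_sq' Qrt2 _ ⟨(d:ℝ), ?_⟩ ?_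
      · exact_mod_cast IntermediateField.natCast_mem Qrt2 d
      · rw [Real.sq_sqrt (by positivity)]
  haveI fin3 : FiniteDimensional ℚ ↥(ktwo d) := FiniteDimensional.trans ℚ ↥Qrt2 ↥(ktwo d)
  -- step 1 : Algebra.norm ℚ u = -1
  have hnn := Algebra.norm_norm (R := ℚ) (S := ↥Qrt2) (A := ↥(ktwo d)) (a := u)
  obtain ⟨a, b, hab, hn⟩ := norm_quad 2 (Real.sqrt 2) s2 irr2 (Algebra.norm ↥Qrt2 u)
  obtain ⟨ha1, hb1⟩ := rep_unique _ irr2 a b 1 1 (by rw [← hab, hu]; push_cast; ring)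
  have hNu : Algebra.norm ℚ u = -1 := by
    rw [← hnn]
    rw [ha1, hb1] at hn
    norm_num at hn
    exact hn
  -- step 2 : move to E over ℚ
  set E := (ktwo d).restrictScalars ℚ with hE
  let e : ↥(ktwo d) ≃ₐ[ℚ] ↥E :=
    AlgEquiv.ofRingEquiv (f := RingEquiv.refl _) (fun q => by apply Subtype.ext; rfl)
  have hNu' : Algebra.norm ℚ (e u) = -1 := by
    rw [Algebra.norm_eq_of_algEquiv e u, hNu]
  haveI finE : FiniteDimensional ℚ ↥E := Module.Finite.equiv e.toLinearEquiv
  -- step 3 : tower ℚ ⊆ F ⊆ E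
  set F := IntermediateField.adjoin ℚ ({Real.sqrt d} : Set ℝ) with hF
  have hFE : F ≤ E := by
    rw [hF]
    apply IntermediateField.adjoin_le_iff.2
    intro x hx
    rw [Set.mem_singleton_iff] at hx
    subst hx
    show Real.sqrt d ∈ E
    rw [hE]
    rw [IntermediateField.mem_restrictScalars]
    unfold ktwo
    exact IntermediateField.subset_adjoin _ _ (by right; rfl)
  letI : Algebra ↥F ↥E := (IntermediateField.inclusion hFE).toRingHom.toAlgebra
  haveI : IsScalarTower ℚ ↥F ↥E :=
    IsScalarTower.of_algebraMap_eq fun q => ((IntermediateField.inclusion hFE).commutes q).symm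
  have hnn2 := Algebra.norm_norm (R := ℚ) (S := ↥F) (A := ↥E) (a := e u)
  obtain ⟨x, y, hxy, hnF⟩ := norm_quad (d:ℚ) (Real.sqrt d) sd irrd (Algebra.norm ↥F (e u))
  have : x^2 - (d:ℚ)*y^2 = -1 := by rw [← hnF, hnn2, hNu']
  exact no_rat_sol d hd ℓ hℓ hℓd hℓ4 x y this
end
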